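/- Let 𝔛 be a Bourgain–Delbaen space with constant C = sup_q ‖i_q‖, and for γ ∈ Γ let e_γ* : 𝔛 → ℝ denote the evaluation functional x ↦ x(γ). Then (e_γ*)_{γ∈Γ} is C-equivalent to the unit vector basis of ℓ1(Γ): for every finite subset A of Γ and all scalars (λ_γ)_{γ∈A}, C⁻¹ ∑_{γ∈A} |λ_γ| ≤ ‖∑_{γ∈A} λ_γ e_γ*‖ ≤ ∑_{γ∈A} |λ_γ|. -/

import Mathlib

open scoped ENNReal
open Filter Topology

set_option maxHeartbeats 1000000
set_option synthInstance.maxHeartbeats 400000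

noncomputable section

/-- `ℓ∞(Γ)`. -/
abbrev Linf (Γ : Type*) : Type _ := lp (fun _ : Γ => ℝ) ∞

namespace BD

variable {Γ : Type*}

/-- The evaluation map on `ℓ∞(Γ)`, as a linear map. -/
def evalLM (γ : Γ) : Linf Γ →ₗ[ℝ] ℝ where
  toFun f := f γ
  map_add' f g := by simp
  map_smul' c f := by simp

/-- The evaluation functional `e_γ^*` on `ℓ∞(Γ)`. -/
def evalL (γ : Γ) : Linf Γ →L[ℝ] ℝ :=
  LinearMap.mkContinuous (evalLM γ) 1 fun f => by
    rw [one_mul]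
    exact lp.norm_apply_le_norm ENNReal.top_ne_zero f γ

/-- The restriction map `ℓ∞(Γ) → ℓ∞(A)`, as a linear map. -/
def restrLM (A : Finset Γ) : Linf Γ →ₗ[ℝ] (↥A → ℝ) where
  toFun f γ := f γ.1
  map_add' f g := by ext γ; simp
  map_smul' c f := by ext γ; simp

/-- The restriction operator `r_A : ℓ∞(Γ) → ℓ∞(A)` for a finite set `A ⊆ Γ`. -/
def restrCLM (A : Finset Γ) : Linf Γ →L[ℝ] (↥A → ℝ) :=
  LinearMap.mkContinuous (restrLM A) 1 fun f => by
    rw [one_mul]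
    refine (pi_norm_le_iff_of_nonneg (norm_nonneg f)).2 fun γ => ?_
    exact lp.norm_apply_le_norm ENNReal.top_ne_zero f γ.1

/-- The data defining a Bourgain-Delbaen space: a strictly increasing sequence of
nonempty finite subsets of `Γ` covering `Γ`, together with a uniformly bounded compatible
sequence of extension operators. -/
structure System (Γ : Type*) where
  Γs : ℕ → Finset Γ
  strict : StrictMono Γs
  nonempty : ∀ q, (Γs q).Nonempty
  covers : ∀ γ : Γ, ∃ q, γ ∈ Γs q
  i : ∀ q, (↥(Γs q) → ℝ) →L[ℝ] Linf Γ
  extension : ∀ q (x : ↥(Γs q) → ℝ) (γ : ↥(Γs q)), i q x γ.1 = x γ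
  compat : ∀ p q, p < q → ∀ x : ↥(Γs p) → ℝ, i p x = i q (restrCLM (Γs q) (i p x))
  bdd : BddAbove (Set.range fun q => ‖i q‖)

/-- `C = sup_q ‖i_q‖`. -/
def System.C (S : System Γ) : ℝ := ⨆ q, ‖S.i q‖

/-- `Δ_0 = Γ_0`, `Δ_q = Γ_q \ Γ_{q-1}`. -/
def System.Δ (S : System Γ) : ℕ → Finset Γ := fun q =>
  letI := Classical.decEq Γ
  match q with
  | 0 => S.Γs 0
  | q + 1 => S.Γs (q + 1) \ S.Γs q

/-- The unique `q` with `γ ∈ Δ_q`. -/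
def System.rk (S : System Γ) (γ : Γ) : ℕ :=
  letI := Classical.decEq Γ
  Nat.find (S.covers γ)

/-- The vector `d_γ = i_q (e_γ)` for `γ ∈ Δ_q`. -/
def System.dvec (S : System Γ) (γ : Γ) : Linf Γ :=
  letI := Classical.decEq Γ
  S.i (S.rk γ) fun δ => if (δ : Γ) = γ then 1 else 0

/-- `M_q = span {d_γ : γ ∈ Δ_q}`. -/
def System.M (S : System Γ) (q : ℕ) : Submodule ℝ (Linf Γ) :=
  Submodule.span ℝ (S.dvec '' (S.Δ q : Set Γ))

/-- The Bourgain-Delbaen space: the closed linear span of the `d_γ`'s in `ℓ∞(Γ)`. -/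
def System.space (S : System Γ) : Submodule ℝ (Linf Γ) :=
  (Submodule.span ℝ (Set.range S.dvec)).topologicalClosure


section ShortcutInstances

noncomputable instance (priority := 10000) instLinfNACG (Γ : Type*) :
    NormedAddCommGroup (Linf Γ) := inferInstance

noncomputable instance (priority := 10000) instLinfNS (Γ : Type*) :
    NormedSpace ℝ (Linf Γ) := inferInstance

noncomputable instance (priority := 10000) instSpaceNACG (S : System Γ) :
    NormedAddCommGroup ↥S.space := inferInstance

noncomputable instance (priority := 10000) instSpaceNS (S : System Γ) :
    NormedSpace ℝ ↥S.space := inferInstance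

noncomputable instance (priority := 10000) instDualNACG (S : System Γ) :
    NormedAddCommGroup (↥S.space →L[ℝ] ℝ) := inferInstance

noncomputable instance (priority := 10000) instDualNS (S : System Γ) :
    NormedSpace ℝ (↥S.space →L[ℝ] ℝ) := inferInstance

end ShortcutInstances

lemma dvec_mem (S : System Γ) (γ : Γ) : S.dvec γ ∈ S.space :=
  Submodule.le_topologicalClosure _ (Submodule.subset_span ⟨γ, rfl⟩)

end BD

/-- The evaluation functional `e_γ^*` restricted to the Bourgain–Delbaen space. -/
def BD.evalS {Γ : Type*} (S : BD.System Γ) (γ : Γ) : ↥S.space →L[ℝ] ℝ :=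
  (BD.evalL γ).comp S.space.subtypeL

namespace BDAux

open BD

variable {Γ : Type*}

lemma gs_mono (S : BD.System Γ) : Monotone S.Γs := S.strict.monotone

lemma rk_eq_of_mem_delta (S : BD.System Γ) {γ : Γ} {q : ℕ} (h : γ ∈ S.Δ q) :
    S.rk γ = q := by
  classical
  rw [BD.System.rk, Nat.find_eq_iff]
  cases q with
  | zero =>
    exact ⟨h, fun n hn => absurd hn (Nat.not_lt_zero n)⟩
  | succ p =>
    classical
    rw [BD.System.Δ, Finset.mem_sdiff] at h
    refine ⟨h.1, fun n hn hmem => h.2 ?_⟩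
    exact gs_mono S (Nat.lt_succ_iff.mp hn) hmem

open scoped Classical in
/-- indicator of `δ` in `ℓ∞(Γ_q)`. -/
def sing (S : BD.System Γ) (q : ℕ) (δ : ↥(S.Γs q)) : ↥(S.Γs q) → ℝ :=
  fun δ' => if (δ' : Γ) = (δ : Γ) then 1 else 0

open scoped Classical in
lemma sing_apply (S : BD.System Γ) (q : ℕ) (δ δ' : ↥(S.Γs q)) :
    sing S q δ δ' = if δ' = δ then 1 else 0 := by
  classical
  simp only [sing]
  by_cases h : δ' = δ
  · simp [h]
  · rw [if_neg h, if_neg (fun h' => h (Subtype.ext h'))]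

lemma dvec_eq (S : BD.System Γ) {γ : Γ} {q : ℕ} (h : γ ∈ S.Δ q)
    (hγ : γ ∈ S.Γs q) : S.dvec γ = S.i q (sing S q ⟨γ, hγ⟩) := by
  classical
  rw [BD.System.dvec, rk_eq_of_mem_delta S h]
  congr 1

lemma i_apply_eq_sum (S : BD.System Γ) (q : ℕ) (y : ↥(S.Γs q) → ℝ) :
    S.i q y = ∑ δ : ↥(S.Γs q), y δ • S.i q (sing S q δ) := by
  classical
  have h1 : y = ∑ δ : ↥(S.Γs q), y δ • sing S q δ := by
    funext δ'
    rw [Finset.sum_apply]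
    simp only [Pi.smul_apply, sing_apply, smul_eq_mul, mul_ite, mul_one, mul_zero]
    simp
  conv_lhs => rw [h1]
  rw [map_sum]
  simp

lemma i_mem_span (S : BD.System Γ) (q : ℕ) (y : ↥(S.Γs q) → ℝ) :
    S.i q y ∈ Submodule.span ℝ (Set.range S.dvec) := by
  classical
  induction q with
  | zero =>
    rw [i_apply_eq_sum]
    refine Submodule.sum_mem _ fun δ _ => Submodule.smul_mem _ _ ?_
    have hδ : (δ : Γ) ∈ S.Δ 0 := δ.2
    rw [← dvec_eq S hδ δ.2]
    exact Submodule.subset_span ⟨(δ : Γ), rfl⟩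
  | succ q ih =>
    have hsub : S.Γs q ⊆ S.Γs (q + 1) := gs_mono S (Nat.le_succ q)
    set u : ↥(S.Γs q) → ℝ := fun δ => y ⟨δ.1, hsub δ.2⟩ with hu
    set v : ↥(S.Γs (q + 1)) → ℝ := y - restrCLM (S.Γs (q + 1)) (S.i q u) with hv
    have hy : S.i (q + 1) y = S.i q u + S.i (q + 1) v := by
      have hc := S.compat q (q + 1) (Nat.lt_succ_self q) u
      rw [hv, map_sub]
      rw [← hc]
      abel
    rw [hy]
    refine Submodule.add_mem _ (ih u) ?_
    rw [i_apply_eq_sum]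
    refine Submodule.sum_mem _ fun δ _ => ?_
    by_cases hδq : (δ : Γ) ∈ S.Γs q
    · have hv0 : v δ = 0 := by
        have : restrCLM (S.Γs (q + 1)) (S.i q u) δ = S.i q u δ.1 := rfl
        have h2 : S.i q u δ.1 = u ⟨δ.1, hδq⟩ := S.extension q u ⟨δ.1, hδq⟩
        simp only [hv, Pi.sub_apply, this, h2, hu]
        rw [← hu, this, h2]
        exact sub_self _
      rw [hv0, zero_smul]
      exact Submodule.zero_mem _
    · refine Submodule.smul_mem _ _ ?_
      have hδ : (δ : Γ) ∈ S.Δ (q + 1) := by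
        classical
        rw [BD.System.Δ, Finset.mem_sdiff]
        exact ⟨δ.2, hδq⟩
      rw [← dvec_eq S hδ δ.2]
      exact Submodule.subset_span ⟨(δ : Γ), rfl⟩

lemma i_mem_space (S : BD.System Γ) (q : ℕ) (y : ↥(S.Γs q) → ℝ) :
    S.i q y ∈ S.space :=
  Submodule.le_topologicalClosure _ (i_mem_span S q y)

lemma norm_i_le_C (S : BD.System Γ) (q : ℕ) : ‖S.i q‖ ≤ S.C :=
  le_ciSup S.bdd q

lemma one_le_C (S : BD.System Γ) : 1 ≤ S.C := by
  obtain ⟨γ, hγ⟩ := S.nonempty 0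
  have hx : ‖(sing S 0 ⟨γ, hγ⟩)‖ ≤ 1 := by
    classical
    refine (pi_norm_le_iff_of_nonneg zero_le_one).2 fun δ => ?_
    rw [sing_apply]
    split <;> simp
  have h1 : (1 : ℝ) ≤ ‖S.i 0 (sing S 0 ⟨γ, hγ⟩)‖ := by
    have := lp.norm_apply_le_norm ENNReal.top_ne_zero
      (S.i 0 (sing S 0 ⟨γ, hγ⟩)) γ
    have heq : S.i 0 (sing S 0 ⟨γ, hγ⟩) γ = 1 := by
      have := S.extension 0 (sing S 0 ⟨γ, hγ⟩) ⟨γ, hγ⟩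
      rw [this, sing_apply, if_pos rfl]
    rw [heq] at this
    simpa using this
  calc (1 : ℝ) ≤ ‖S.i 0 (sing S 0 ⟨γ, hγ⟩)‖ := h1
    _ ≤ ‖S.i 0‖ * 1 := by
        calc ‖S.i 0 _‖ ≤ ‖S.i 0‖ * ‖(sing S 0 ⟨γ, hγ⟩)‖ :=
              (S.i 0).le_opNorm _
          _ ≤ ‖S.i 0‖ * 1 := by
              exact mul_le_mul_of_nonneg_left hx (norm_nonneg _)
    _ = ‖S.i 0‖ := mul_one _
    _ ≤ S.C := norm_i_le_C S 0

lemma norm_evalS_le_one (S : BD.System Γ) (γ : Γ) : ‖BD.evalS S γ‖ ≤ 1 := by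
  refine ContinuousLinearMap.opNorm_le_bound _ zero_le_one fun x => ?_
  rw [one_mul]
  have : BD.evalS S γ x = (x : Linf Γ) γ := rfl
  rw [this]
  calc ‖(x : Linf Γ) γ‖ ≤ ‖(x : Linf Γ)‖ :=
        lp.norm_apply_le_norm ENNReal.top_ne_zero (x : Linf Γ) γ
    _ = ‖x‖ := rfl

lemma abs_sign_le_one (t : ℝ) : |Real.sign t| ≤ 1 := by
  rcases lt_trichotomy t 0 with h | h | h
  · rw [Real.sign_of_neg h]; norm_num
  · rw [h, Real.sign_zero]; norm_num
  · rw [Real.sign_of_pos h]; norm_num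

lemma mul_sign (t : ℝ) : t * Real.sign t = |t| := by
  rcases lt_trichotomy t 0 with h | h | h
  · rw [Real.sign_of_neg h, abs_of_neg h]; ring
  · simp [h]
  · rw [Real.sign_of_pos h, abs_of_pos h]; ring

end BDAux

/-- In a Bourgain–Delbaen space with `C = sup_q ‖i_q‖`, the evaluation
functionals `(e_γ^*)_{γ ∈ Γ}` are `C`-equivalent to the unit vector basis of `ℓ1(Γ)`. -/
theorem statement3 {Γ : Type*} (S : BD.System Γ) :
    ∀ (A : Finset Γ) (lam : Γ → ℝ),
      S.C⁻¹ * ∑ γ ∈ A, |lam γ| ≤ ‖∑ γ ∈ A, lam γ • BD.evalS S γ‖ ∧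
      ‖∑ γ ∈ A, lam γ • BD.evalS S γ‖ ≤ ∑ γ ∈ A, |lam γ| := by
  intro A lam
  have hC1 : (1 : ℝ) ≤ S.C := BDAux.one_le_C S
  have hC0 : (0 : ℝ) < S.C := lt_of_lt_of_le one_pos hC1
  constructor
  · -- lower bound
    obtain ⟨q, hq⟩ : ∃ q, ∀ γ ∈ A, γ ∈ S.Γs q := by
      refine ⟨A.sup S.rk, fun γ hγ => ?_⟩
      have h1 : γ ∈ S.Γs (S.rk γ) := by
        classical
        unfold BD.System.rk
        exact Nat.find_spec (S.covers γ)
      exact BDAux.gs_mono S (Finset.le_sup hγ) h1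
    set ε : ↥(S.Γs q) → ℝ := fun δ => Real.sign (lam δ.1) with hε
    set x : Linf Γ := S.i q ε with hx
    have hxmem : x ∈ S.space := BDAux.i_mem_space S q ε
    set x' : ↥S.space := ⟨x, hxmem⟩ with hx'
    have hxn : ‖x'‖ ≤ S.C := by
      have h1 : ‖ε‖ ≤ 1 := by
        refine (pi_norm_le_iff_of_nonneg zero_le_one).2 fun δ => ?_
        simpa [hε] using BDAux.abs_sign_le_one (lam δ.1)
      have : ‖x‖ ≤ ‖S.i q‖ * ‖ε‖ := (S.i q).le_opNorm ε
      calc ‖x'‖ = ‖x‖ := rfl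
        _ ≤ ‖S.i q‖ * ‖ε‖ := this
        _ ≤ S.C * 1 := mul_le_mul (BDAux.norm_i_le_C S q) h1 (norm_nonneg _)
              (le_of_lt hC0)
        _ = S.C := mul_one _
    have hval : (∑ γ ∈ A, lam γ • BD.evalS S γ) x' = ∑ γ ∈ A, |lam γ| := by
      rw [ContinuousLinearMap.sum_apply]
      refine Finset.sum_congr rfl fun γ hγ => ?_
      have hev : BD.evalS S γ x' = x γ := rfl
      have hxγ : x γ = Real.sign (lam γ) := by
        have := S.extension q ε ⟨γ, hq γ hγ⟩
        simpa [hε] using this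
      rw [ContinuousLinearMap.smul_apply, hev, hxγ, smul_eq_mul, BDAux.mul_sign]
    have hle : ∑ γ ∈ A, |lam γ| ≤ ‖∑ γ ∈ A, lam γ • BD.evalS S γ‖ * S.C := by
      calc ∑ γ ∈ A, |lam γ| = (∑ γ ∈ A, lam γ • BD.evalS S γ) x' := hval.symm
        _ ≤ ‖(∑ γ ∈ A, lam γ • BD.evalS S γ) x'‖ := le_abs_self _
        _ ≤ ‖∑ γ ∈ A, lam γ • BD.evalS S γ‖ * ‖x'‖ :=
            ContinuousLinearMap.le_opNorm _ _
        _ ≤ ‖∑ γ ∈ A, lam γ • BD.evalS S γ‖ * S.C :=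
            mul_le_mul_of_nonneg_left hxn (norm_nonneg _)
    rw [inv_mul_le_iff₀ hC0, mul_comm]
    exact hle
  · -- upper bound
    calc ‖∑ γ ∈ A, lam γ • BD.evalS S γ‖ ≤ ∑ γ ∈ A, ‖lam γ • BD.evalS S γ‖ :=
          norm_sum_le _ _
      _ ≤ ∑ γ ∈ A, |lam γ| := by
          refine Finset.sum_le_sum fun γ _ => ?_
          rw [norm_smul, Real.norm_eq_abs]
          calc |lam γ| * ‖BD.evalS S γ‖ ≤ |lam γ| * 1 :=
                mul_le_mul_of_nonneg_left (BDAux.norm_evalS_le_one S γ) (abs_nonneg _)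
            _ = |lam γ| := mul_one _
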